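/- Let n = 1, m > 0 and 1/2 < θ ≤ 1. Then there exist positive constants C₁, C₂ and t₀ > 0 such that for all t ≥ t₀ and all P₁ ∈ ℝ, (C₁/(1+m²)^{1/(2θ)}) P₁² t^{(2θ−1)/θ} ≤ ∫_{|ξ| ≤ 1} |φ(t,ξ)|² dξ ≤ (C₂/m²) (1/(2θ−1)) P₁² t^{(2θ−1)/θ}. -/

import Mathlib

open MeasureTheory Real

noncomputable section

/-- Euclidean space `ℝⁿ`. -/
abbrev E (n : ℕ) := EuclideanSpace ℝ (Fin n)

/-- The asymptotic profile `φ(t,ξ)`, as a function of `r = |ξ|`. -/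
def phi (m θ P₁ t r : ℝ) : ℝ :=
  P₁ * Real.exp (-(r ^ 2) * t / 2) *
    Real.sin (t * Real.sqrt (r ^ 2 + m ^ 2 * Real.log (1 + r ^ (2 * θ)))) /
    Real.sqrt (r ^ 2 + m ^ 2 * Real.log (1 + r ^ (2 * θ)))

namespace Stmt17Aux

lemma A_nonneg {m θ r : ℝ} (hr : 0 ≤ r) :
    0 ≤ r ^ 2 + m ^ 2 * Real.log (1 + r ^ (2 * θ)) := by
  have hx : 0 ≤ r ^ (2 * θ) := Real.rpow_nonneg hr _
  have hL : 0 ≤ Real.log (1 + r ^ (2 * θ)) := Real.log_nonneg (by linarith)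
  nlinarith [sq_nonneg m, sq_nonneg r]

lemma up1 {m θ P₁ t r : ℝ} (ht : 0 ≤ t) (hr : 0 ≤ r) :
    (phi m θ P₁ t r) ^ 2 ≤ P₁ ^ 2 * t ^ 2 := by
  have hA0 : 0 ≤ r ^ 2 + m ^ 2 * Real.log (1 + r ^ (2 * θ)) := A_nonneg hr
  set A := r ^ 2 + m ^ 2 * Real.log (1 + r ^ (2 * θ)) with hA
  unfold phi
  rw [← hA, div_pow, Real.sq_sqrt hA0]
  rcases eq_or_lt_of_le hA0 with h | h
  · rw [← h, div_zero]; positivity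
  · rw [div_le_iff₀ h]
    set e := Real.exp (-(r ^ 2) * t / 2) with he
    set s := Real.sin (t * Real.sqrt A) with hs
    have he1 : e ≤ 1 := Real.exp_le_one_iff.mpr (by nlinarith [sq_nonneg r])
    have he0 : 0 ≤ e := (Real.exp_pos _).le
    have hs2 : s ^ 2 ≤ t ^ 2 * A := by
      have := Real.sin_sq_le_sq (x := t * Real.sqrt A)
      rw [← hs] at this
      calc s ^ 2 ≤ (t * Real.sqrt A) ^ 2 := this
        _ = t ^ 2 * A := by rw [mul_pow, Real.sq_sqrt hA0]
    have hs0 : 0 ≤ s ^ 2 := sq_nonneg s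
    calc (P₁ * e * s) ^ 2 = P₁ ^ 2 * (e ^ 2 * s ^ 2) := by ring
      _ ≤ P₁ ^ 2 * (1 * (t ^ 2 * A)) := by
          gcongr
          · exact pow_le_one₀ he0 he1
      _ = P₁ ^ 2 * t ^ 2 * A := by ring

lemma log_ge {x : ℝ} (hx : 0 ≤ x) (hx1 : x ≤ 1) : x / 2 ≤ Real.log (1 + x) := by
  have h0 : (0:ℝ) < 1 + x := by linarith
  have h1 : Real.log (1 + x)⁻¹ ≤ (1 + x)⁻¹ - 1 := Real.log_le_sub_one_of_pos (by positivity)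
  rw [Real.log_inv] at h1
  have h2 : 1 - (1 + x)⁻¹ ≤ Real.log (1 + x) := by linarith
  have h3 : x / 2 ≤ 1 - (1 + x)⁻¹ := by
    rw [le_sub_iff_add_le]
    rw [inv_eq_one_div]
    rw [div_add_div _ _ (by norm_num) h0.ne', div_le_one (by positivity)]
    nlinarith
  linarith

lemma up2 {m θ P₁ t r : ℝ} (ht : 0 ≤ t) (hm : 0 < m) (hθ : 0 < θ)
    (hr : 0 < r) (hr1 : r ≤ 1) :
    (phi m θ P₁ t r) ^ 2 ≤ P₁ ^ 2 * (2 / (m ^ 2 * r ^ (2 * θ))) := by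
  have hx : 0 < r ^ (2 * θ) := Real.rpow_pos_of_pos hr _
  have hx1 : r ^ (2 * θ) ≤ 1 := Real.rpow_le_one hr.le hr1 (by positivity)
  have hL : r ^ (2 * θ) / 2 ≤ Real.log (1 + r ^ (2 * θ)) := log_ge hx.le hx1
  have hA : m ^ 2 * r ^ (2 * θ) / 2 ≤ r ^ 2 + m ^ 2 * Real.log (1 + r ^ (2 * θ)) := by
    nlinarith [sq_nonneg r, sq_nonneg m]
  have hApos : 0 < r ^ 2 + m ^ 2 * Real.log (1 + r ^ (2 * θ)) := by
    have : 0 < m ^ 2 * r ^ (2 * θ) / 2 := by positivity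
    linarith
  set A := r ^ 2 + m ^ 2 * Real.log (1 + r ^ (2 * θ)) with hAdef
  unfold phi
  rw [← hAdef, div_pow, Real.sq_sqrt hApos.le]
  set e := Real.exp (-(r ^ 2) * t / 2) with he
  set s := Real.sin (t * Real.sqrt A) with hs
  have he1 : e ≤ 1 := Real.exp_le_one_iff.mpr (by nlinarith [sq_nonneg r])
  have he0 : 0 ≤ e := (Real.exp_pos _).le
  have hnum : (P₁ * e * s) ^ 2 ≤ P₁ ^ 2 := by
    have hs1 : s ^ 2 ≤ 1 := Real.sin_sq_le_one _
    have he2 : e ^ 2 ≤ 1 := pow_le_one₀ he0 he1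
    calc (P₁ * e * s) ^ 2 = P₁ ^ 2 * (e ^ 2 * s ^ 2) := by ring
      _ ≤ P₁ ^ 2 * (1 * 1) := by gcongr
      _ = P₁ ^ 2 := by ring
  calc (P₁ * e * s) ^ 2 / A ≤ P₁ ^ 2 / A := by gcongr
    _ ≤ P₁ ^ 2 / (m ^ 2 * r ^ (2 * θ) / 2) := by gcongr
    _ = P₁ ^ 2 * (2 / (m ^ 2 * r ^ (2 * θ))) := by
        rw [div_div_eq_mul_div, mul_div_assoc]

lemma low {m θ P₁ t r : ℝ} (hm : 0 < m) (hθ0 : 0 < θ) (hθ2 : θ ≤ 1) (ht : 1 ≤ t)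
    (hr : 0 < r) (hr1 : r ≤ 1)
    (hA1 : (1 + m ^ 2) * r ^ (2 * θ) ≤ 1 / t ^ 2) (hrt : r ^ 2 * t ≤ 1) :
    P₁ ^ 2 * (9 / 16 * Real.exp (-1) * t ^ 2) ≤ (phi m θ P₁ t r) ^ 2 := by
  have htpos : (0:ℝ) < t := lt_of_lt_of_le one_pos ht
  have hx : 0 < r ^ (2 * θ) := Real.rpow_pos_of_pos hr _
  have hL0 : 0 ≤ Real.log (1 + r ^ (2 * θ)) := Real.log_nonneg (by linarith)
  have hLx : Real.log (1 + r ^ (2 * θ)) ≤ r ^ (2 * θ) := by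
    have := Real.log_le_sub_one_of_pos (x := 1 + r ^ (2 * θ)) (by positivity)
    linarith
  have hr2x : r ^ 2 ≤ r ^ (2 * θ) := by
    have h := Real.rpow_le_rpow_of_exponent_ge hr hr1 (by linarith : 2 * θ ≤ 2)
    rwa [show ((2:ℝ)) = ((2:ℕ):ℝ) by norm_num, Real.rpow_natCast] at h
  set A := r ^ 2 + m ^ 2 * Real.log (1 + r ^ (2 * θ)) with hAdef
  have hApos : 0 < A := by positivity
  have hAle : A ≤ 1 / t ^ 2 := by
    have : A ≤ (1 + m ^ 2) * r ^ (2 * θ) := by nlinarith [sq_nonneg m]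
    linarith
  have hsqrtA : Real.sqrt A ≤ 1 / t := by
    have h1 : Real.sqrt A ≤ Real.sqrt (1 / t ^ 2) := Real.sqrt_le_sqrt hAle
    have h2 : Real.sqrt (1 / t ^ 2) = 1 / t := by
      rw [show (1 / t ^ 2) = (1 / t) ^ 2 by ring, Real.sqrt_sq (by positivity)]
    linarith
  set y := t * Real.sqrt A with hy
  have hy0 : 0 < y := by positivity
  have hy1 : y ≤ 1 := by
    calc y = t * Real.sqrt A := hy
      _ ≤ t * (1 / t) := mul_le_mul_of_nonneg_left hsqrtA htpos.le
      _ = 1 := by field_simp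
  have hsin : 3 / 4 * y ≤ Real.sin y := by
    have h := Real.sin_gt_sub_cube hy0
    nlinarith [sq_nonneg y]
  have hsin0 : 0 ≤ 3 / 4 * y := by positivity
  have hsinsq : 9 / 16 * (t ^ 2 * A) ≤ Real.sin y ^ 2 := by
    have := pow_le_pow_left₀ hsin0 hsin 2
    have hy2 : y ^ 2 = t ^ 2 * A := by rw [hy, mul_pow, Real.sq_sqrt hApos.le]
    nlinarith
  set e := Real.exp (-(r ^ 2) * t / 2) with he
  have hexp : Real.exp (-1) ≤ e ^ 2 := by
    rw [he, ← Real.exp_nat_mul]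
    apply Real.exp_le_exp.mpr
    push_cast
    nlinarith
  unfold phi
  rw [← hAdef, ← hy, ← he, div_pow, Real.sq_sqrt hApos.le, le_div_iff₀ hApos]
  have hP : 0 ≤ P₁ ^ 2 := sq_nonneg P₁
  calc P₁ ^ 2 * (9 / 16 * Real.exp (-1) * t ^ 2) * A
      = P₁ ^ 2 * (Real.exp (-1) * (9 / 16 * (t ^ 2 * A))) := by ring
    _ ≤ P₁ ^ 2 * (e ^ 2 * Real.sin y ^ 2) := by
        apply mul_le_mul_of_nonneg_left _ hP
        exact mul_le_mul hexp hsinsq (by positivity) (by positivity)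
    _ = (P₁ * e * Real.sin y) ^ 2 := by ring

lemma meas (m θ P₁ t : ℝ) (hθ : 0 < θ) :
    Measurable (fun ξ : ℝ => (phi m θ P₁ t |ξ|) ^ 2) := by
  unfold phi
  have habs : Continuous fun ξ : ℝ => |ξ| := continuous_abs
  have hA : Continuous fun ξ : ℝ =>
      |ξ| ^ 2 + m ^ 2 * Real.log (1 + |ξ| ^ (2 * θ)) := by
    apply ((habs.pow 2).add (continuous_const.mul _))
    apply Continuous.log
    · exact continuous_const.add ((Real.continuous_rpow_const (by positivity)).comp habs)
    · intro x
      have : (0:ℝ) ≤ |x| ^ (2 * θ) := Real.rpow_nonneg (abs_nonneg x) _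
      positivity
  have hN : Continuous fun ξ : ℝ =>
      P₁ * Real.exp (-(|ξ| ^ 2) * t / 2) *
        Real.sin (t * Real.sqrt (|ξ| ^ 2 + m ^ 2 * Real.log (1 + |ξ| ^ (2 * θ)))) := by
    apply Continuous.mul
    · exact continuous_const.mul (Real.continuous_exp.comp
        ((((habs.pow 2).neg).mul continuous_const).div_const 2))
    · exact Real.continuous_sin.comp (continuous_const.mul (hA.sqrt))
  exact ((hN.measurable).div (hA.sqrt).measurable).pow_const 2

end Stmt17Aux

set_option maxHeartbeats 1000000 in
/-- Lemma 6.5: growth of the profile for `n = 1`, `1/2 < θ ≤ 1`. -/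
theorem stmt17 (m θ : ℝ) (hm : 0 < m) (hθ1 : 1 / 2 < θ) (hθ2 : θ ≤ 1) :
    ∃ C₁ C₂ t₀ : ℝ, 0 < C₁ ∧ 0 < C₂ ∧ 0 < t₀ ∧
      ∀ t : ℝ, t₀ ≤ t → ∀ P₁ : ℝ,
        C₁ / (1 + m ^ 2) ^ (1 / (2 * θ)) * P₁ ^ 2 * t ^ ((2 * θ - 1) / θ) ≤
            (∫ ξ in {ξ : ℝ | |ξ| ≤ 1}, (phi m θ P₁ t |ξ|) ^ 2) ∧
          (∫ ξ in {ξ : ℝ | |ξ| ≤ 1}, (phi m θ P₁ t |ξ|) ^ 2) ≤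
            C₂ / m ^ 2 * (1 / (2 * θ - 1)) * P₁ ^ 2 * t ^ ((2 * θ - 1) / θ) := by
  have hθ0 : (0:ℝ) < θ := by linarith
  have hθ12 : (0:ℝ) < 2 * θ - 1 := by linarith
  refine ⟨9 / 16 * Real.exp (-1), 2 * m ^ 2 * (2 * θ - 1) + 4, 1,
    by positivity, by nlinarith [sq_nonneg m], one_pos, ?_⟩
  intro t ht P₁
  have htpos : (0:ℝ) < t := lt_of_lt_of_le one_pos ht
  have hset : {ξ : ℝ | |ξ| ≤ 1} = Set.Icc (-1:ℝ) 1 := by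
    ext ξ; simp [abs_le]
  rw [hset]
  have hb : ∀ ξ : ℝ, (phi m θ P₁ t |ξ|) ^ 2 ≤ P₁ ^ 2 * t ^ 2 :=
    fun ξ => Stmt17Aux.up1 htpos.le (abs_nonneg ξ)
  have hmg := Stmt17Aux.meas m θ P₁ t hθ0
  have hInt : IntegrableOn (fun ξ : ℝ => (phi m θ P₁ t |ξ|) ^ 2) (Set.Icc (-1:ℝ) 1) := by
    apply Measure.integrableOn_of_bounded (M := P₁ ^ 2 * t ^ 2)
    case s_finite => rw [Real.volume_Icc]; exact ENNReal.ofReal_ne_top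
    case f_mble => exact hmg.aestronglyMeasurable
    case f_bdd =>
      filter_upwards with ξ
      rw [Real.norm_eq_abs, abs_of_nonneg (sq_nonneg _)]
      exact hb ξ
  -- common quantities
  have hbp : (0:ℝ) < 1 + m ^ 2 := by positivity
  have hbase : (1:ℝ) ≤ 1 + m ^ 2 := by nlinarith [sq_nonneg m]
  have hr'pos : (0:ℝ) < t ^ (-(1/θ)) := Real.rpow_pos_of_pos htpos _
  have hr'1 : t ^ (-(1/θ)) ≤ 1 :=
    Real.rpow_le_one_of_one_le_of_nonpos ht (by rw [neg_nonpos]; positivity)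
  have hτ : (2 * θ - 1) / θ = -(1/θ) + 2 := by field_simp; ring
  have hT : t ^ ((2 * θ - 1) / θ) = t ^ (-(1/θ)) * t ^ 2 := by
    rw [hτ, Real.rpow_add htpos, show ((2:ℝ)) = ((2:ℕ):ℝ) by norm_num, Real.rpow_natCast]
  constructor
  · -- LOWER BOUND
    set δ := (1 + m ^ 2) ^ (-(1/(2*θ))) * t ^ (-(1/θ)) with hδ
    have hf1 : (0:ℝ) < (1 + m ^ 2) ^ (-(1/(2*θ))) := Real.rpow_pos_of_pos hbp _
    have hf1' : (1 + m ^ 2) ^ (-(1/(2*θ))) ≤ 1 :=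
      Real.rpow_le_one_of_one_le_of_nonpos hbase (by rw [neg_nonpos]; positivity)
    have hδpos : 0 < δ := mul_pos hf1 hr'pos
    have hδ1 : δ ≤ 1 := by
      calc δ ≤ 1 * 1 := mul_le_mul hf1' hr'1 hr'pos.le zero_le_one
        _ = 1 := mul_one 1
    have hδr' : δ ≤ t ^ (-(1/θ)) := by nlinarith
    have hδpow : δ ^ (2*θ) = (1 + m ^ 2)⁻¹ * (t ^ 2)⁻¹ := by
      rw [hδ, Real.mul_rpow hf1.le hr'pos.le,
        ← Real.rpow_mul hbp.le, ← Real.rpow_mul htpos.le,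
        show -(1/(2*θ)) * (2*θ) = -1 by field_simp <;> ring_nf,
        show -(1/θ) * (2*θ) = -2 by field_simp <;> ring_nf,
        Real.rpow_neg_one,
        show ((-2:ℝ)) = -((2:ℕ):ℝ) by norm_num,
        Real.rpow_neg htpos.le, Real.rpow_natCast]
    have hkey : ∀ ξ ∈ Set.Ioc (0:ℝ) δ,
        P₁ ^ 2 * (9/16 * Real.exp (-1) * t ^ 2) ≤ (phi m θ P₁ t |ξ|) ^ 2 := by
      intro ξ hξ
      have h0 : 0 < ξ := hξ.1
      have hξδ : ξ ≤ δ := hξ.2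
      rw [abs_of_pos h0]
      have hξ1 : ξ ≤ 1 := le_trans hξδ hδ1
      have hxx : ξ ^ (2*θ) ≤ δ ^ (2*θ) := Real.rpow_le_rpow h0.le hξδ (by positivity)
      have hc1 : (1 + m ^ 2) * ξ ^ (2*θ) ≤ 1 / t ^ 2 := by
        have h' := hxx.trans_eq hδpow
        calc (1 + m ^ 2) * ξ ^ (2*θ) ≤ (1 + m ^ 2) * ((1 + m ^ 2)⁻¹ * (t ^ 2)⁻¹) :=
              mul_le_mul_of_nonneg_left h' hbp.le
          _ = 1 / t ^ 2 := by field_simp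
      have hc2 : ξ ^ 2 * t ≤ 1 := by
        have hξr' : ξ ≤ t ^ (-(1/θ)) := le_trans hξδ hδr'
        have h1 : ξ ^ 2 ≤ (t ^ (-(1/θ))) ^ 2 := by nlinarith
        have e1 : (t ^ (-(1/θ))) ^ 2 = t ^ (-(2/θ)) := by
          rw [← Real.rpow_natCast (t ^ (-(1/θ))) 2, ← Real.rpow_mul htpos.le]
          congr 1
          push_cast
          ring
        have e2 : t ^ (-(2/θ)) * t = t ^ (1 - 2/θ) := by
          nth_rewrite 2 [← Real.rpow_one t]
          rw [← Real.rpow_add htpos]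
          ring_nf
        have h2 : (t ^ (-(1/θ))) ^ 2 * t ≤ 1 := by
          rw [e1, e2]
          apply Real.rpow_le_one_of_one_le_of_nonpos ht
          have : (2:ℝ) ≤ 2 / θ := by rw [le_div_iff₀ hθ0]; linarith
          linarith
        nlinarith
      exact Stmt17Aux.low hm hθ0 hθ2 ht h0 hξ1 hc1 hc2
    have hsub : Set.Ioc (0:ℝ) δ ⊆ Set.Icc (-1:ℝ) 1 := by
      intro x hx
      exact ⟨by linarith [hx.1], le_trans hx.2 hδ1⟩
    have hIg : IntegrableOn (fun ξ : ℝ => (phi m θ P₁ t |ξ|) ^ 2) (Set.Ioc (0:ℝ) δ) :=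
      hInt.mono_set hsub
    have s1 : (∫ ξ in Set.Ioc (0:ℝ) δ, (phi m θ P₁ t |ξ|) ^ 2) ≤
        ∫ ξ in Set.Icc (-1:ℝ) 1, (phi m θ P₁ t |ξ|) ^ 2 :=
      setIntegral_mono_set hInt (Filter.Eventually.of_forall fun x => sq_nonneg _)
        (HasSubset.Subset.eventuallyLE hsub)
    have s0 : (∫ _ in Set.Ioc (0:ℝ) δ, (P₁ ^ 2 * (9/16 * Real.exp (-1) * t ^ 2))) ≤
        ∫ ξ in Set.Ioc (0:ℝ) δ, (phi m θ P₁ t |ξ|) ^ 2 := by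
      apply setIntegral_mono_on _ hIg measurableSet_Ioc hkey
      exact integrableOn_const (by rw [Real.volume_Ioc]; exact ENNReal.ofReal_ne_top)
    have s2 : (∫ _ in Set.Ioc (0:ℝ) δ, (P₁ ^ 2 * (9/16 * Real.exp (-1) * t ^ 2))) =
        δ * (P₁ ^ 2 * (9/16 * Real.exp (-1) * t ^ 2)) := by
      rw [setIntegral_const, Real.volume_real_Ioc_of_le (by linarith), smul_eq_mul,
        sub_zero]
    have hfin : 9/16 * Real.exp (-1) / (1 + m ^ 2) ^ (1/(2*θ)) * P₁ ^ 2 * t ^ ((2*θ-1)/θ) =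
        δ * (P₁ ^ 2 * (9/16 * Real.exp (-1) * t ^ 2)) := by
      rw [hT, hδ, Real.rpow_neg hbp.le]
      have hne : ((1 + m ^ 2):ℝ) ^ (1/(2*θ)) ≠ 0 := ne_of_gt (Real.rpow_pos_of_pos hbp _)
      field_simp
    rw [s2] at s0
    linarith [s0, s1]
  · -- UPPER BOUND
    set r' := t ^ (-(1/θ)) with hr'def
    have hII : ∀ a b : ℝ, -1 ≤ a → b ≤ 1 → a ≤ b →
        IntervalIntegrable (fun ξ : ℝ => (phi m θ P₁ t |ξ|) ^ 2) volume a b := by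
      intro a b ha hb1 hab
      rw [intervalIntegrable_iff, Set.uIoc_of_le hab]
      exact hInt.mono_set (fun x hx => ⟨by linarith [hx.1], le_trans hx.2 hb1⟩)
    have I1 := hII (-1) (-r') le_rfl (by linarith) (by linarith)
    have I2 := hII (-r') r' (by linarith) hr'1 (by linarith)
    have I3 := hII r' 1 (by linarith) le_rfl hr'1
    have hIcc : (∫ ξ in Set.Icc (-1:ℝ) 1, (phi m θ P₁ t |ξ|) ^ 2) =
        ∫ ξ in (-1:ℝ)..1, (phi m θ P₁ t |ξ|) ^ 2 := by
      rw [intervalIntegral.integral_of_le (by norm_num : (-1:ℝ) ≤ 1),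
        MeasureTheory.integral_Icc_eq_integral_Ioc]
    have hadd1 := intervalIntegral.integral_add_adjacent_intervals I1 I2
    have hadd2 := intervalIntegral.integral_add_adjacent_intervals (I1.trans I2) I3
    have hmid : (∫ x in (-r')..r', (phi m θ P₁ t |x|) ^ 2) ≤ 2 * r' * (P₁ ^ 2 * t ^ 2) := by
      calc (∫ x in (-r')..r', (phi m θ P₁ t |x|) ^ 2)
          ≤ ∫ _x in (-r')..r', (P₁ ^ 2 * t ^ 2) :=
            intervalIntegral.integral_mono_on (by linarith) I2 intervalIntegrable_const
              (fun x _ => hb x)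
        _ = (r' - (-r')) • (P₁ ^ 2 * t ^ 2) := intervalIntegral.integral_const _
        _ = 2 * r' * (P₁ ^ 2 * t ^ 2) := by rw [smul_eq_mul]; ring
    have hIb : IntervalIntegrable (fun x : ℝ => 2 * P₁ ^ 2 / m ^ 2 * x ^ (-(2*θ)))
        volume r' 1 := by
      apply ContinuousOn.intervalIntegrable
      rw [Set.uIcc_of_le hr'1]
      apply continuousOn_const.mul
      intro x hx
      have hx0 : 0 < x := lt_of_lt_of_le hr'pos hx.1
      exact (Real.continuousAt_rpow_const x _ (Or.inl hx0.ne')).continuousWithinAt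
    have hIbneg : IntervalIntegrable (fun x : ℝ => 2 * P₁ ^ 2 / m ^ 2 * (-x) ^ (-(2*θ)))
        volume (-1) (-r') := by
      apply ContinuousOn.intervalIntegrable
      rw [Set.uIcc_of_le (by linarith : (-1:ℝ) ≤ -r')]
      apply continuousOn_const.mul
      intro x hx
      have hx0 : 0 < -x := by have := hx.2; linarith
      exact (ContinuousAt.comp (Real.continuousAt_rpow_const (-x) _ (Or.inl hx0.ne'))
        (continuous_neg.continuousAt)).continuousWithinAt
    have hptR : ∀ x ∈ Set.Icc r' 1,
        (phi m θ P₁ t |x|) ^ 2 ≤ 2 * P₁ ^ 2 / m ^ 2 * x ^ (-(2*θ)) := by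
      intro x hx
      have hx0 : 0 < x := lt_of_lt_of_le hr'pos hx.1
      rw [abs_of_pos hx0]
      have h := Stmt17Aux.up2 (P₁ := P₁) htpos.le hm hθ0 hx0 hx.2
      have heq : P₁ ^ 2 * (2 / (m ^ 2 * x ^ (2*θ))) = 2 * P₁ ^ 2 / m ^ 2 * x ^ (-(2*θ)) := by
        rw [Real.rpow_neg hx0.le]
        have hxp : (0:ℝ) < x ^ (2*θ) := Real.rpow_pos_of_pos hx0 _
        field_simp
      exact le_of_le_of_eq h heq
    have hptL : ∀ x ∈ Set.Icc (-1:ℝ) (-r'),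
        (phi m θ P₁ t |x|) ^ 2 ≤ 2 * P₁ ^ 2 / m ^ 2 * (-x) ^ (-(2*θ)) := by
      intro x hx
      have hx0 : 0 < -x := by have := hx.2; linarith
      rw [abs_of_neg (by linarith : x < 0)]
      have hx1 : -x ≤ 1 := by have := hx.1; linarith
      have h := Stmt17Aux.up2 (P₁ := P₁) htpos.le hm hθ0 hx0 hx1
      have heq : P₁ ^ 2 * (2 / (m ^ 2 * (-x) ^ (2*θ))) = 2 * P₁ ^ 2 / m ^ 2 * (-x) ^ (-(2*θ)) := by
        rw [Real.rpow_neg hx0.le]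
        have hxp : (0:ℝ) < (-x) ^ (2*θ) := Real.rpow_pos_of_pos hx0 _
        field_simp
      exact le_of_le_of_eq h heq
    have hR : (∫ x in r'..1, (phi m θ P₁ t |x|) ^ 2) ≤
        ∫ x in r'..1, 2 * P₁ ^ 2 / m ^ 2 * x ^ (-(2*θ)) :=
      intervalIntegral.integral_mono_on hr'1 I3 hIb hptR
    have hLft : (∫ x in (-1:ℝ)..(-r'), (phi m θ P₁ t |x|) ^ 2) ≤
        ∫ x in (-1:ℝ)..(-r'), 2 * P₁ ^ 2 / m ^ 2 * (-x) ^ (-(2*θ)) :=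
      intervalIntegral.integral_mono_on (by linarith) I1 hIbneg hptL
    have hJeval : (∫ x in r'..1, x ^ (-(2*θ))) = (1 - r' ^ (-(2*θ)+1)) / (-(2*θ)+1) := by
      rw [integral_rpow]
      · rw [Real.one_rpow]
      · right
        refine ⟨by intro h; linarith, ?_⟩
        rw [Set.uIcc_of_le hr'1]
        intro h0
        exact absurd h0.1 (not_le.mpr hr'pos)
    have hRpow : r' ^ (-(2*θ)+1) = t ^ ((2*θ-1)/θ) := by
      rw [hr'def, ← Real.rpow_mul htpos.le]
      congr 1
      field_simp
      ring
    have hJle : (∫ x in r'..1, x ^ (-(2*θ))) ≤ t ^ ((2*θ-1)/θ) / (2*θ-1) := by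
      rw [hJeval, hRpow]
      have he : (1 - t ^ ((2*θ-1)/θ)) / (-(2*θ)+1) = (t ^ ((2*θ-1)/θ) - 1) / (2*θ-1) := by
        rw [div_eq_div_iff (by linarith) (by linarith)]
        ring
      rw [he]
      exact (div_le_div_iff_of_pos_right hθ12).mpr (by linarith)
    have hconstmul : (∫ x in r'..1, 2 * P₁ ^ 2 / m ^ 2 * x ^ (-(2*θ))) =
        2 * P₁ ^ 2 / m ^ 2 * ∫ x in r'..1, x ^ (-(2*θ)) :=
      intervalIntegral.integral_const_mul _ _
    have hnegconv : (∫ x in (-1:ℝ)..(-r'), 2 * P₁ ^ 2 / m ^ 2 * (-x) ^ (-(2*θ))) =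
        ∫ x in r'..1, 2 * P₁ ^ 2 / m ^ 2 * x ^ (-(2*θ)) := by
      have := intervalIntegral.integral_comp_neg (a := (-1:ℝ)) (b := -r')
        (fun x => 2 * P₁ ^ 2 / m ^ 2 * x ^ (-(2*θ)))
      simpa using this
    have hPm : (0:ℝ) ≤ 2 * P₁ ^ 2 / m ^ 2 := by positivity
    have hbound2 : (∫ x in r'..1, 2 * P₁ ^ 2 / m ^ 2 * x ^ (-(2*θ))) ≤
        2 * P₁ ^ 2 / m ^ 2 * (t ^ ((2*θ-1)/θ) / (2*θ-1)) := by
      rw [hconstmul]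
      exact mul_le_mul_of_nonneg_left hJle hPm
    have hr't : r' * t ^ 2 = t ^ ((2*θ-1)/θ) := hT.symm
    have hRHS : (2 * m ^ 2 * (2*θ-1) + 4) / m ^ 2 * (1/(2*θ-1)) * P₁ ^ 2 * t ^ ((2*θ-1)/θ) =
        2 * (2 * P₁ ^ 2 / m ^ 2 * (t ^ ((2*θ-1)/θ) / (2*θ-1))) + 2 * r' * (P₁ ^ 2 * t ^ 2) := by
      rw [show 2 * r' * (P₁ ^ 2 * t ^ 2) = 2 * P₁ ^ 2 * (r' * t ^ 2) by ring, hr't]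
      have hm2 : (m:ℝ) ^ 2 ≠ 0 := by positivity
      have h21 : (2*θ-1) ≠ 0 := ne_of_gt hθ12
      field_simp
      ring
    rw [hIcc, ← hadd2, ← hadd1, hRHS]
    linarith [hLft, hmid, hR, hbound2, hnegconv.le, hnegconv.ge]

end
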